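/- Let n ≥ 2 and let D ⊆ ℝⁿ be an open connected set with D ≠ ℝⁿ. Then for every triple of points x, y, z ∈ D the triangle inequality holds for the modulus metric: μ_D(x,z) ≤ μ_D(x,y) + μ_D(y,z). -/

import Mathlib

open MeasureTheory Metric Set

/-- Conformal capacity of the condenser `(D, K)` in `ℝⁿ`:
`cap(D,K) = inf ∫_{D∖K} ‖Du‖ⁿ dm` over C¹ functions `u` with compact support in `D`
with `u ≥ 1` on `K` (with `inf ∅ = ∞`). -/
noncomputable def conformalCap (n : ℕ) (D K : Set (EuclideanSpace ℝ (Fin n))) : ENNReal :=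
  sInf { e : ENNReal | ∃ u : EuclideanSpace ℝ (Fin n) → ℝ,
    ContDiff ℝ 1 u ∧ HasCompactSupport u ∧ tsupport u ⊆ D ∧
    (∀ x ∈ K, 1 ≤ u x) ∧
    e = ∫⁻ x in D \ K, (‖fderiv ℝ u x‖₊ : ENNReal) ^ n }

/-- The modulus metric: `μ_D(x,y) = inf cap(D,γ)` over compact connected `γ ⊆ D`
containing `x` and `y`. -/
noncomputable def modMetric (n : ℕ) (D : Set (EuclideanSpace ℝ (Fin n)))
    (x y : EuclideanSpace ℝ (Fin n)) : ENNReal :=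
  sInf { e : ENNReal | ∃ γ : Set (EuclideanSpace ℝ (Fin n)),
    IsCompact γ ∧ IsConnected γ ∧ γ ⊆ D ∧ x ∈ γ ∧ y ∈ γ ∧ e = conformalCap n D γ }

section key

variable {n : ℕ} {D K₁ K₂ : Set (EuclideanSpace ℝ (Fin n))}

lemma conformalCap_le {K : Set (EuclideanSpace ℝ (Fin n))}
    (u : EuclideanSpace ℝ (Fin n) → ℝ) (h1 : ContDiff ℝ 1 u) (h2 : HasCompactSupport u)
    (h3 : tsupport u ⊆ D) (h4 : ∀ x ∈ K, 1 ≤ u x) :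
    conformalCap n D K ≤ ∫⁻ x in D \ K, (‖fderiv ℝ u x‖₊ : ENNReal) ^ n := by
  unfold conformalCap
  exact sInf_le ⟨u, h1, h2, h3, h4, rfl⟩

set_option maxHeartbeats 1000000 in
lemma capKey (u v : EuclideanSpace ℝ (Fin n) → ℝ)
    (hu : ContDiff ℝ 1 u) (hcu : HasCompactSupport u) (hsu : tsupport u ⊆ D)
    (hu1 : ∀ x ∈ K₁, 1 ≤ u x)
    (hv : ContDiff ℝ 1 v) (hcv : HasCompactSupport v) (hsv : tsupport v ⊆ D)
    (hv1 : ∀ x ∈ K₂, 1 ≤ v x)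
    (ε : ℝ) (hε0 : 0 < ε) (hε1 : ε < 1) :
    conformalCap n D (K₁ ∪ K₂) ≤ ENNReal.ofReal (((1 - ε/2)⁻¹) ^ n) *
      ((∫⁻ x in D \ K₁, (‖fderiv ℝ u x‖₊ : ENNReal) ^ n) +
       (∫⁻ x in D \ K₂, (‖fderiv ℝ v x‖₊ : ENNReal) ^ n)) := by
  have hden : (0:ℝ) < 1 - ε/2 := by linarith
  set σ : ℝ := (1 - ε/2)⁻¹ with hσdef
  have hσ0 : 0 < σ := inv_pos.2 hden
  set g : EuclideanSpace ℝ (Fin n) → ℝ := fun x => u x - v x with hgdef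
  set q : EuclideanSpace ℝ (Fin n) → ℝ := fun x => g x * g x + ε^2 with hqdef
  have hqx : ∀ x, q x = (u x - v x) * (u x - v x) + ε^2 := fun _ => rfl
  have hqpos : ∀ x, 0 < q x := by
    intro x
    rw [hqx x]
    nlinarith [mul_self_nonneg (u x - v x), pow_pos hε0 2]
  have hq0 : ∀ x, q x ≠ 0 := fun x => (hqpos x).ne'
  set r : EuclideanSpace ℝ (Fin n) → ℝ := fun x => Real.sqrt (q x) with hrdef
  have hrpos : ∀ x, 0 < r x := fun x => Real.sqrt_pos.2 (hqpos x)
  have hrabs : ∀ x, |g x| ≤ r x := by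
    intro x
    calc |g x| = Real.sqrt (g x * g x) := (Real.sqrt_mul_self_eq_abs _).symm
      _ ≤ r x := Real.sqrt_le_sqrt
          (by show g x * g x ≤ q x
              have hg : g x = u x - v x := rfl
              rw [hqx x, hg]; nlinarith [sq_nonneg ε])
  set W : EuclideanSpace ℝ (Fin n) → ℝ :=
    fun x => (σ/2) * (u x + v x + r x - ε) with hWdef
  have hud : Differentiable ℝ u := hu.differentiable one_ne_zero
  have hvd : Differentiable ℝ v := hv.differentiable one_ne_zero
  -- W is C¹
  have hrC : ContDiff ℝ 1 r := by
    rw [contDiff_iff_contDiffAt]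
    intro x
    exact ContDiffAt.sqrt (((hu.sub hv).mul (hu.sub hv)).add contDiff_const).contDiffAt (hq0 x)
  have hWC : ContDiff ℝ 1 W :=
    contDiff_const.mul (((hu.add hv).add hrC).sub contDiff_const)
  -- support of W
  have hWsupp : tsupport W ⊆ tsupport u ∪ tsupport v := by
    have hsub : Function.support W ⊆ tsupport u ∪ tsupport v := by
      intro x hx
      by_contra h
      simp only [mem_union] at h
      push_neg at h
      have hu0 : u x = 0 := image_eq_zero_of_notMem_tsupport h.1
      have hv0 : v x = 0 := image_eq_zero_of_notMem_tsupport h.2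
      apply hx
      have hr0 : r x = ε := by
        have h1 : q x = ε ^ 2 := by rw [hqx x, hu0, hv0]; ring
        show Real.sqrt (q x) = ε
        rw [h1, Real.sqrt_sq hε0.le]
      simp [hWdef, hu0, hv0, hr0]
    exact closure_minimal hsub ((isClosed_tsupport u).union (isClosed_tsupport v))
  have hWcs : HasCompactSupport W :=
    IsCompact.of_isClosed_subset (hcu.union hcv) (isClosed_tsupport W) hWsupp
  have hWD : tsupport W ⊆ D := hWsupp.trans (union_subset hsu hsv)
  -- W ≥ 1 on K₁ ∪ K₂
  have hW1 : ∀ x ∈ K₁ ∪ K₂, 1 ≤ W x := by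
    intro x hxmem
    have ha := hrabs x
    have h1 : g x ≤ r x := (le_abs_self _).trans ha
    have h2 : -(g x) ≤ r x := (neg_le_abs _).trans ha
    have hσc : σ * (1 - ε/2) = 1 := by
      rw [hσdef]; exact inv_mul_cancel₀ hden.ne'
    have hkey : (σ/2) * (2 - ε) = 1 := by linear_combination hσc
    have hsum : 2 - ε ≤ u x + v x + r x - ε := by
      rcases hxmem with hx1 | hx2
      · have := hu1 x hx1
        simp only [hgdef] at h1
        linarith
      · have := hv1 x hx2
        simp only [hgdef] at h2
        linarith
    calc (1:ℝ) = (σ/2) * (2 - ε) := hkey.symm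
      _ ≤ (σ/2) * (u x + v x + r x - ε) := by
          apply mul_le_mul_of_nonneg_left hsum (by positivity)
      _ = W x := rfl
  -- pointwise derivative bound
  have hDW : ∀ x, ‖fderiv ℝ W x‖ ≤ σ * max ‖fderiv ℝ u x‖ ‖fderiv ℝ v x‖ := by
    intro x
    have hgx : HasFDerivAt g (fderiv ℝ u x - fderiv ℝ v x) x :=
      ((hud x).hasFDerivAt).sub ((hvd x).hasFDerivAt)
    have hqd : HasFDerivAt q
        (g x • (fderiv ℝ u x - fderiv ℝ v x) + g x • (fderiv ℝ u x - fderiv ℝ v x)) x :=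
      (hgx.mul hgx).add_const (ε^2)
    have hrx : HasFDerivAt r ((1 / (2 * Real.sqrt (q x))) •
        (g x • (fderiv ℝ u x - fderiv ℝ v x) + g x • (fderiv ℝ u x - fderiv ℝ v x))) x :=
      hqd.sqrt (hq0 x)
    have hWx : HasFDerivAt W ((σ/2) • (fderiv ℝ u x + fderiv ℝ v x +
        (1 / (2 * Real.sqrt (q x))) •
        (g x • (fderiv ℝ u x - fderiv ℝ v x) + g x • (fderiv ℝ u x - fderiv ℝ v x)))) x := by
      exact ((((hud x).hasFDerivAt.add ((hvd x).hasFDerivAt)).add hrx).sub_const ε).const_mul (σ/2)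
    rw [hWx.fderiv]
    set Du := fderiv ℝ u x
    set Dv := fderiv ℝ v x
    set c : ℝ := g x / r x with hc
    have hrq : Real.sqrt (q x) = r x := rfl
    have hrewrite : (σ/2) • (Du + Dv + (1 / (2 * Real.sqrt (q x))) •
        (g x • (Du - Dv) + g x • (Du - Dv))) =
        (σ/2) • ((1+c) • Du + (1-c) • Dv) := by
      rw [hrq]
      have h2 : (1 / (2 * r x)) • (g x • (Du - Dv) + g x • (Du - Dv)) = c • (Du - Dv) := by
        rw [smul_add, smul_smul, ← add_smul]
        congr 1
        rw [hc]
        field_simp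
        ring
      rw [h2]
      module
    rw [hrewrite]
    have hc1 : |c| ≤ 1 := by
      rw [hc, abs_div, abs_of_pos (hrpos x)]
      exact div_le_one_of_le₀ (hrabs x) (hrpos x).le
    rw [abs_le] at hc1
    have hb1 : ‖(1+c) • Du + (1-c) • Dv‖ ≤ (1+c) * ‖Du‖ + (1-c) * ‖Dv‖ := by
      calc ‖(1+c) • Du + (1-c) • Dv‖ ≤ ‖(1+c) • Du‖ + ‖(1-c) • Dv‖ := norm_add_le _ _
        _ = (1+c) * ‖Du‖ + (1-c) * ‖Dv‖ := by
            rw [norm_smul, norm_smul, Real.norm_eq_abs, Real.norm_eq_abs,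
              abs_of_nonneg (by linarith), abs_of_nonneg (by linarith)]
    calc ‖(σ/2) • ((1+c) • Du + (1-c) • Dv)‖
        = (σ/2) * ‖(1+c) • Du + (1-c) • Dv‖ := by
          rw [norm_smul, Real.norm_eq_abs, abs_of_pos (by positivity)]
      _ ≤ (σ/2) * ((1+c) * ‖Du‖ + (1-c) * ‖Dv‖) :=
          mul_le_mul_of_nonneg_left hb1 (by positivity)
      _ ≤ (σ/2) * (2 * max ‖Du‖ ‖Dv‖) := by
          have hm1 : ‖Du‖ ≤ max ‖Du‖ ‖Dv‖ := le_max_left _ _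
          have hm2 : ‖Dv‖ ≤ max ‖Du‖ ‖Dv‖ := le_max_right _ _
          have key2 : (1+c) * ‖Du‖ + (1-c) * ‖Dv‖ ≤ 2 * max ‖Du‖ ‖Dv‖ := by
            nlinarith [norm_nonneg Du, norm_nonneg Dv]
          exact mul_le_mul_of_nonneg_left key2 (by positivity)
      _ = σ * max ‖Du‖ ‖Dv‖ := by ring
  -- pointwise bound in ENNReal
  have hpt : ∀ x, (‖fderiv ℝ W x‖₊ : ENNReal) ^ n ≤ ENNReal.ofReal (σ ^ n) *
      ((‖fderiv ℝ u x‖₊ : ENNReal) ^ n + (‖fderiv ℝ v x‖₊ : ENNReal) ^ n) := by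
    intro x
    rw [← enorm_eq_nnnorm, ← enorm_eq_nnnorm, ← enorm_eq_nnnorm, ← ofReal_norm, ← ofReal_norm, ← ofReal_norm]
    calc ENNReal.ofReal ‖fderiv ℝ W x‖ ^ n
        ≤ ENNReal.ofReal (σ * max ‖fderiv ℝ u x‖ ‖fderiv ℝ v x‖) ^ n := by
          gcongr
          exact hDW x
      _ = ENNReal.ofReal σ ^ n * ENNReal.ofReal (max ‖fderiv ℝ u x‖ ‖fderiv ℝ v x‖) ^ n := by
          rw [ENNReal.ofReal_mul hσ0.le, mul_pow]
      _ ≤ ENNReal.ofReal (σ ^ n) *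
          (ENNReal.ofReal ‖fderiv ℝ u x‖ ^ n + ENNReal.ofReal ‖fderiv ℝ v x‖ ^ n) := by
          rw [ENNReal.ofReal_pow hσ0.le]
          gcongr
          rcases max_cases ‖fderiv ℝ u x‖ ‖fderiv ℝ v x‖ with ⟨hm, _⟩ | ⟨hm, _⟩ <;> rw [hm]
          · exact le_self_add
          · exact le_add_self
  -- measurability
  have hmeasu : Measurable fun x => (‖fderiv ℝ u x‖₊ : ENNReal) ^ n :=
    ((hu.continuous_fderiv one_ne_zero).nnnorm.measurable.coe_nnreal_ennreal).pow_const n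
  -- integral bound
  have hint : (∫⁻ x in D \ (K₁ ∪ K₂), (‖fderiv ℝ W x‖₊ : ENNReal) ^ n) ≤
      ENNReal.ofReal (σ ^ n) *
      ((∫⁻ x in D \ K₁, (‖fderiv ℝ u x‖₊ : ENNReal) ^ n) +
       (∫⁻ x in D \ K₂, (‖fderiv ℝ v x‖₊ : ENNReal) ^ n)) := by
    calc (∫⁻ x in D \ (K₁ ∪ K₂), (‖fderiv ℝ W x‖₊ : ENNReal) ^ n)
        ≤ ∫⁻ x in D \ (K₁ ∪ K₂), ENNReal.ofReal (σ ^ n) *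
            ((‖fderiv ℝ u x‖₊ : ENNReal) ^ n + (‖fderiv ℝ v x‖₊ : ENNReal) ^ n) :=
          lintegral_mono fun x => hpt x
      _ = ENNReal.ofReal (σ ^ n) * ∫⁻ x in D \ (K₁ ∪ K₂),
            ((‖fderiv ℝ u x‖₊ : ENNReal) ^ n + (‖fderiv ℝ v x‖₊ : ENNReal) ^ n) :=
          lintegral_const_mul' _ _ ENNReal.ofReal_ne_top
      _ = ENNReal.ofReal (σ ^ n) *
            ((∫⁻ x in D \ (K₁ ∪ K₂), (‖fderiv ℝ u x‖₊ : ENNReal) ^ n) +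
             (∫⁻ x in D \ (K₁ ∪ K₂), (‖fderiv ℝ v x‖₊ : ENNReal) ^ n)) := by
          rw [lintegral_add_left hmeasu]
      _ ≤ ENNReal.ofReal (σ ^ n) *
            ((∫⁻ x in D \ K₁, (‖fderiv ℝ u x‖₊ : ENNReal) ^ n) +
             (∫⁻ x in D \ K₂, (‖fderiv ℝ v x‖₊ : ENNReal) ^ n)) := by
          refine mul_le_mul_right (add_le_add ?_ ?_) _
          · exact lintegral_mono_set (diff_subset_diff_right subset_union_left)
          · exact lintegral_mono_set (diff_subset_diff_right subset_union_right)
  exact le_trans (conformalCap_le W hWC hWcs hWD hW1) hint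

lemma cap_union_le :
    conformalCap n D (K₁ ∪ K₂) ≤ conformalCap n D K₁ + conformalCap n D K₂ := by
  have step : ∀ u v : EuclideanSpace ℝ (Fin n) → ℝ,
      ContDiff ℝ 1 u → HasCompactSupport u → tsupport u ⊆ D → (∀ x ∈ K₁, 1 ≤ u x) →
      ContDiff ℝ 1 v → HasCompactSupport v → tsupport v ⊆ D → (∀ x ∈ K₂, 1 ≤ v x) →
      conformalCap n D (K₁ ∪ K₂) ≤
        (∫⁻ x in D \ K₁, (‖fderiv ℝ u x‖₊ : ENNReal) ^ n) +
        (∫⁻ x in D \ K₂, (‖fderiv ℝ v x‖₊ : ENNReal) ^ n) := by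
    intro u v hu hcu hsu hu1 hv hcv hsv hv1
    set C := (∫⁻ x in D \ K₁, (‖fderiv ℝ u x‖₊ : ENNReal) ^ n) +
        (∫⁻ x in D \ K₂, (‖fderiv ℝ v x‖₊ : ENNReal) ^ n) with hC
    have hbound : ∀ ε : ℝ, 0 < ε → ε < 1 →
        conformalCap n D (K₁ ∪ K₂) ≤ ENNReal.ofReal (((1 - ε/2)⁻¹) ^ n) * C :=
      fun ε h0 h1 => capKey u v hu hcu hsu hu1 hv hcv hsv hv1 ε h0 h1
    haveI : (nhdsWithin (0:ℝ) (Set.Ioo 0 1)).NeBot := by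
      apply mem_closure_iff_nhdsWithin_neBot.1
      rw [closure_Ioo (by norm_num : (0:ℝ) ≠ 1)]
      exact ⟨le_refl 0, zero_le_one⟩
    have hT : Filter.Tendsto (fun ε : ℝ => ENNReal.ofReal (((1 - ε/2)⁻¹) ^ n) * C)
        (nhdsWithin (0:ℝ) (Set.Ioo 0 1)) (nhds C) := by
      have h1 : Filter.Tendsto (fun ε : ℝ => ((1 - ε/2)⁻¹) ^ n) (nhds 0) (nhds 1) := by
        have hcont : Continuous fun ε : ℝ => 1 - ε/2 :=
          continuous_const.sub (continuous_id.div_const 2)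
        have := ((hcont.tendsto 0).inv₀ (by norm_num)).pow n
        simpa using this
      have h2 : Filter.Tendsto (fun ε : ℝ => ENNReal.ofReal (((1 - ε/2)⁻¹) ^ n))
          (nhds 0) (nhds 1) := by
        have := (ENNReal.continuous_ofReal.tendsto 1).comp h1
        simpa [Function.comp_def] using this
      have h3 := ENNReal.Tendsto.mul_const (b := C) h2 (Or.inl one_ne_zero)
      rw [one_mul] at h3
      exact h3.mono_left nhdsWithin_le_nhds
    refine ge_of_tendsto hT ?_
    filter_upwards [self_mem_nhdsWithin] with ε hε
    exact hbound ε hε.1 hε.2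
  conv_rhs => rw [conformalCap.eq_1 n D K₁, conformalCap.eq_1 n D K₂]
  rw [ENNReal.sInf_add]
  refine le_iInf₂ fun a ha => ?_
  rw [add_comm, ENNReal.sInf_add]
  refine le_iInf₂ fun b hb => ?_
  obtain ⟨u, hu, hcu, hsu, hu1, rfl⟩ := ha
  obtain ⟨v, hv, hcv, hsv, hv1, rfl⟩ := hb
  rw [add_comm]
  exact step u v hu hcu hsu hu1 hv hcv hsv hv1

end key

/-- Triangle inequality for the modulus metric. -/
theorem modMetric_triangle (n : ℕ) (hn : 2 ≤ n)
    (D : Set (EuclideanSpace ℝ (Fin n)))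
    (hDopen : IsOpen D) (hDconn : IsConnected D) (hDne : D ≠ Set.univ)
    (x y z : EuclideanSpace ℝ (Fin n)) (hx : x ∈ D) (hy : y ∈ D) (hz : z ∈ D) :
    modMetric n D x z ≤ modMetric n D x y + modMetric n D y z := by
  conv_rhs => rw [modMetric.eq_1 n D x y, modMetric.eq_1 n D y z]
  rw [ENNReal.sInf_add]
  refine le_iInf₂ fun a ha => ?_
  rw [add_comm, ENNReal.sInf_add]
  refine le_iInf₂ fun b hb => ?_
  obtain ⟨γ₁, hγ₁c, hγ₁conn, hγ₁D, hxγ, hyγ, rfl⟩ := ha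
  obtain ⟨γ₂, hγ₂c, hγ₂conn, hγ₂D, hyγ₂, hzγ, rfl⟩ := hb
  rw [add_comm]
  calc modMetric n D x z ≤ conformalCap n D (γ₁ ∪ γ₂) := by
        rw [modMetric.eq_1]
        exact sInf_le ⟨γ₁ ∪ γ₂, hγ₁c.union hγ₂c, IsConnected.union ⟨y, hyγ, hyγ₂⟩ hγ₁conn hγ₂conn,
          union_subset hγ₁D hγ₂D, Or.inl hxγ, Or.inr hzγ, rfl⟩
    _ ≤ conformalCap n D γ₁ + conformalCap n D γ₂ := cap_union_le
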